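/- Let (Ω, Σ, μ) be a complete σ-finite measure space, 1 ≤ p < ∞, and X a Banach space. Then n(L_p(μ, X)) ≤ n(X). -/

import Mathlib

open scoped ENNReal

noncomputable def vrad {X : Type*} [NormedAddCommGroup X] [NormedSpace ℝ X] (T : X →L[ℝ] X) : ℝ :=
  sSup {r : ℝ | ∃ x : X, ∃ f : X →L[ℝ] ℝ, ‖x‖ = 1 ∧ ‖f‖ = 1 ∧ f x = 1 ∧ r = |f (T x)|}

noncomputable def nindex (X : Type*) [NormedAddCommGroup X] [NormedSpace ℝ X] : ℝ :=
  sInf {r : ℝ | ∃ T : X →L[ℝ] X, ‖T‖ = 1 ∧ r = vrad T}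

section Aux

variable {Y : Type*} [NormedAddCommGroup Y] [NormedSpace ℝ Y]

lemma vradSet_bddAbove (T : Y →L[ℝ] Y) :
    BddAbove {r : ℝ | ∃ x : Y, ∃ f : Y →L[ℝ] ℝ, ‖x‖ = 1 ∧ ‖f‖ = 1 ∧ f x = 1 ∧ r = |f (T x)|} := by
  refine ⟨‖T‖, ?_⟩
  rintro r ⟨x, f, hx, hf, -, rfl⟩
  calc |f (T x)| = ‖f (T x)‖ := (Real.norm_eq_abs _).symm
    _ ≤ ‖f‖ * ‖T x‖ := f.le_opNorm _
    _ ≤ ‖f‖ * (‖T‖ * ‖x‖) := by gcongr; exact T.le_opNorm x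
    _ = ‖T‖ := by rw [hf, hx]; ring

lemma abs_le_vrad {T : Y →L[ℝ] Y} {x : Y} {f : Y →L[ℝ] ℝ}
    (hx : ‖x‖ = 1) (hf : ‖f‖ = 1) (hfx : f x = 1) : |f (T x)| ≤ vrad T :=
  le_csSup (vradSet_bddAbove T) ⟨x, f, hx, hf, hfx, rfl⟩

lemma vrad_nonneg [Nontrivial Y] (T : Y →L[ℝ] Y) : 0 ≤ vrad T := by
  obtain ⟨y, hy⟩ := exists_ne (0 : Y)
  have hxn : ‖(‖y‖⁻¹ • y)‖ = 1 := by
    rw [norm_smul, norm_inv, norm_norm, inv_mul_cancel₀ (norm_ne_zero_iff.mpr hy)]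
  obtain ⟨f, hf, hfx⟩ := exists_dual_vector ℝ (‖y‖⁻¹ • y) (by
    intro h; rw [h] at hxn; exact zero_ne_one hxn)
  have hfx' : f (‖y‖⁻¹ • y) = ‖(‖y‖⁻¹ • y)‖ := by exact_mod_cast hfx
  have hfx1 : f (‖y‖⁻¹ • y) = 1 := by rw [hfx', hxn]
  exact le_trans (abs_nonneg _) (abs_le_vrad hxn hf hfx1)

lemma vrad_le_norm (T : Y →L[ℝ] Y) : vrad T ≤ ‖T‖ := by
  apply Real.sSup_le _ (norm_nonneg T)
  rintro r ⟨x, f, hx, hf, -, rfl⟩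
  calc |f (T x)| = ‖f (T x)‖ := (Real.norm_eq_abs _).symm
    _ ≤ ‖f‖ * ‖T x‖ := f.le_opNorm _
    _ ≤ ‖f‖ * (‖T‖ * ‖x‖) := by gcongr; exact T.le_opNorm x
    _ = ‖T‖ := by rw [hf, hx]; ring

/-- Key operator-norm estimate: if every norming pair gives `f (U x) ≤ β`, then
`‖1 + t U‖ ≤ (1 + t²)/(1 - tβ)` for small `t > 0`. -/
lemma norm_one_add_smul_le [CompleteSpace Y] (U : Y →L[ℝ] Y) (hU : ‖U‖ ≤ 1) {β : ℝ}
    (hβ1 : β ≤ 1)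
    (hβ : ∀ (x : Y) (f : Y →L[ℝ] ℝ), ‖x‖ = 1 → ‖f‖ = 1 → f x = 1 → f (U x) ≤ β)
    {t : ℝ} (ht0 : 0 < t) (ht1 : t < 1) :
    ‖(1 : Y →L[ℝ] Y) + t • U‖ ≤ (1 + t ^ 2) / (1 - t * β) := by
  have hden : 0 < 1 - t * β := by nlinarith
  -- lower bound for `1 - t U`
  have hlow : ∀ z : Y, (1 - t * β) * ‖z‖ ≤ ‖z - t • U z‖ := by
    intro z
    rcases eq_or_ne z 0 with rfl | hz
    · simp
    · obtain ⟨f, hf, hfz'⟩ := exists_dual_vector ℝ z (norm_ne_zero_iff.mpr hz)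
      have hfz : f z = ‖z‖ := by exact_mod_cast hfz'
      have hzpos : (0 : ℝ) < ‖z‖ := norm_pos_iff.mpr hz
      have hxn : ‖(‖z‖⁻¹ • z)‖ = 1 := by
        rw [norm_smul, norm_inv, norm_norm, inv_mul_cancel₀ hzpos.ne']
      have hfx1 : f (‖z‖⁻¹ • z) = 1 := by
        rw [map_smul, smul_eq_mul, hfz, inv_mul_cancel₀ hzpos.ne']
      have h1 : f (U (‖z‖⁻¹ • z)) ≤ β := hβ _ f hxn hf hfx1
      have h2 : f (U z) ≤ ‖z‖ * β := by
        have he : f (U z) = ‖z‖ * f (U (‖z‖⁻¹ • z)) := by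
          rw [map_smul, map_smul, smul_eq_mul, ← mul_assoc,
            mul_inv_cancel₀ hzpos.ne', one_mul]
        rw [he]
        exact mul_le_mul_of_nonneg_left h1 hzpos.le
      have h3 : f (z - t • U z) ≤ ‖z - t • U z‖ := by
        calc f (z - t • U z) ≤ |f (z - t • U z)| := le_abs_self _
          _ = ‖f (z - t • U z)‖ := (Real.norm_eq_abs _).symm
          _ ≤ ‖f‖ * ‖z - t • U z‖ := f.le_opNorm _
          _ = ‖z - t • U z‖ := by rw [hf, one_mul]
      have h4 : f (z - t • U z) = f z - t * f (U z) := by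
        rw [map_sub, map_smul, smul_eq_mul]
      nlinarith [hfz ▸ h4 ▸ h3]
  set V := t • U with hV
  have hVt : ‖V‖ ≤ t := by
    have h8 := norm_smul_le t U
    have h9 : ‖t‖ = t := by rw [Real.norm_eq_abs, abs_of_pos ht0]
    rw [h9] at h8
    nlinarith [norm_nonneg U]
  have hVn : ‖V‖ < 1 := lt_of_le_of_lt hVt ht1
  set u : (Y →L[ℝ] Y)ˣ := Units.oneSub V hVn with hu
  have huval : (↑u : Y →L[ℝ] Y) = 1 - V := rfl
  have hprod : (↑u : Y →L[ℝ] Y) * (1 + V) = 1 - V * V := by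
    rw [huval]; noncomm_ring
  have hid : ((1 : Y →L[ℝ] Y) + V) = ↑u⁻¹ * (1 - V * V) := by
    rw [← hprod, Units.inv_mul_cancel_left]
  refine ContinuousLinearMap.opNorm_le_bound _ (by positivity) fun z => ?_
  have hz1 : ((1 : Y →L[ℝ] Y) + V) z = (↑u⁻¹ : Y →L[ℝ] Y) (((1 : Y →L[ℝ] Y) - V * V) z) := by
    rw [hid]; rfl
  set w := ((1 : Y →L[ℝ] Y) - V * V) z with hw
  have hwb : ‖w‖ ≤ (1 + t ^ 2) * ‖z‖ := by
    have hVV : ‖(V * V) z‖ ≤ t ^ 2 * ‖z‖ := by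
      have := (V * V).le_opNorm z
      have h5 : ‖V * V‖ ≤ t ^ 2 := by
        have h10 := norm_mul_le V V
        nlinarith [norm_nonneg V]
      nlinarith [norm_nonneg z]
    calc ‖w‖ = ‖z - (V * V) z‖ := by rw [hw]; simp [ContinuousLinearMap.sub_apply]
      _ ≤ ‖z‖ + ‖(V * V) z‖ := norm_sub_le _ _
      _ ≤ (1 + t ^ 2) * ‖z‖ := by nlinarith
  have hy : (1 - t * β) * ‖(↑u⁻¹ : Y →L[ℝ] Y) w‖ ≤ ‖w‖ := by
    have h6 := hlow ((↑u⁻¹ : Y →L[ℝ] Y) w)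
    have h7 : (↑u⁻¹ : Y →L[ℝ] Y) w - t • U ((↑u⁻¹ : Y →L[ℝ] Y) w) = w := by
      have : ((↑u : Y →L[ℝ] Y) * (↑u⁻¹ : Y →L[ℝ] Y)) w = w := by
        rw [Units.mul_inv]; rfl
      calc (↑u⁻¹ : Y →L[ℝ] Y) w - t • U ((↑u⁻¹ : Y →L[ℝ] Y) w)
          = ((1 : Y →L[ℝ] Y) - V) ((↑u⁻¹ : Y →L[ℝ] Y) w) := by
            simp [hV, ContinuousLinearMap.sub_apply, ContinuousLinearMap.smul_apply]
        _ = ((↑u : Y →L[ℝ] Y) * (↑u⁻¹ : Y →L[ℝ] Y)) w := by rw [huval]; rfl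
        _ = w := this
    rw [h7] at h6
    exact h6
  rw [hz1]
  rw [div_mul_eq_mul_div, le_div_iff₀ hden]
  nlinarith [norm_nonneg ((↑u⁻¹ : Y →L[ℝ] Y) w), norm_nonneg z]

/-- If `‖1 + tS‖ ≤ (1+t²)/(1-tβ)` for all small `t > 0`, then every norming pair of `S`
satisfies `Φ (S g) ≤ β`. -/
lemma pair_bound {Z : Type*} [NormedAddCommGroup Z] [NormedSpace ℝ Z]
    (S : Z →L[ℝ] Z) {β : ℝ} (hβ1 : β ≤ 1)
    (h : ∀ t : ℝ, 0 < t → t < 1 → ‖(1 : Z →L[ℝ] Z) + t • S‖ ≤ (1 + t ^ 2) / (1 - t * β))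
    {g : Z} {Φ : Z →L[ℝ] ℝ}
    (hg : ‖g‖ = 1) (hΦ : ‖Φ‖ = 1) (hΦg : Φ g = 1) : Φ (S g) ≤ β := by
  have key : ∀ t : ℝ, 0 < t → t < 1 → Φ (S g) ≤ (t + β) / (1 - t * β) := by
    intro t ht0 ht1
    have hden : 0 < 1 - t * β := by nlinarith
    have h1 : Φ (((1 : Z →L[ℝ] Z) + t • S) g) ≤ (1 + t ^ 2) / (1 - t * β) := by
      calc Φ (((1 : Z →L[ℝ] Z) + t • S) g) ≤ |Φ (((1 : Z →L[ℝ] Z) + t • S) g)| := le_abs_self _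
        _ = ‖Φ (((1 : Z →L[ℝ] Z) + t • S) g)‖ := (Real.norm_eq_abs _).symm
        _ ≤ ‖Φ‖ * ‖((1 : Z →L[ℝ] Z) + t • S) g‖ := Φ.le_opNorm _
        _ ≤ ‖Φ‖ * (‖(1 : Z →L[ℝ] Z) + t • S‖ * ‖g‖) := by
            gcongr; exact ((1 : Z →L[ℝ] Z) + t • S).le_opNorm g
        _ = ‖(1 : Z →L[ℝ] Z) + t • S‖ := by rw [hΦ, hg]; ring
        _ ≤ (1 + t ^ 2) / (1 - t * β) := h t ht0 ht1
    have h2 : Φ (((1 : Z →L[ℝ] Z) + t • S) g) = 1 + t * Φ (S g) := by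
      simp [ContinuousLinearMap.add_apply, ContinuousLinearMap.smul_apply, hΦg]
    rw [h2] at h1
    rw [le_div_iff₀ hden] at h1 ⊢
    nlinarith
  have hlim : Filter.Tendsto (fun t : ℝ => (t + β) / (1 - t * β)) (nhdsWithin 0 (Set.Ioi 0))
      (nhds β) := by
    have hc : ContinuousAt (fun t : ℝ => (t + β) / (1 - t * β)) 0 := by
      apply ContinuousAt.div
      · fun_prop
      · fun_prop
      · norm_num
    have := hc.continuousWithinAt.tendsto (s := Set.Ioi (0:ℝ))
    simpa using this
  refine ge_of_tendsto hlim ?_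
  filter_upwards [Ioo_mem_nhdsGT_of_mem (Set.mem_Ico.mpr ⟨le_refl (0:ℝ), zero_lt_one⟩)]
    with t ht
  exact key t ht.1 ht.2

end Aux

open MeasureTheory

section LpAux

variable {Ω : Type*} [MeasurableSpace Ω] {μ : Measure Ω} {p : ℝ≥0∞} [Fact (1 ≤ p)]
variable {X : Type*} [NormedAddCommGroup X] [NormedSpace ℝ X] [CompleteSpace X]

lemma compLpL_id : (ContinuousLinearMap.id ℝ X).compLpL p μ = ContinuousLinearMap.id ℝ (Lp X p μ) := by
  ext f
  filter_upwards [ContinuousLinearMap.coeFn_compLpL (ContinuousLinearMap.id ℝ X) f] with a ha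
  simpa using ha

lemma compLpL_one_add_smul (t : ℝ) (T : X →L[ℝ] X) :
    ((1 : X →L[ℝ] X) + t • T).compLpL p μ = (1 : Lp X p μ →L[ℝ] Lp X p μ) + t • T.compLpL p μ := by
  rw [ContinuousLinearMap.add_compLpL, ContinuousLinearMap.smul_compLpL]
  congr 1
  exact compLpL_id

lemma compLpL_indicatorConstLp (L : X →L[ℝ] X) {A : Set Ω} (hA : MeasurableSet A)
    (hAfin : μ A ≠ ∞) (x : X) :
    L.compLpL p μ (indicatorConstLp p hA hAfin x) = indicatorConstLp p hA hAfin (L x) := by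
  apply Lp.ext
  filter_upwards [ContinuousLinearMap.coeFn_compLpL L (indicatorConstLp p hA hAfin x),
    indicatorConstLp_coeFn (p := p) (hs := hA) (hμs := hAfin) (c := x),
    indicatorConstLp_coeFn (p := p) (hs := hA) (hμs := hAfin) (c := L x)] with a h1 h2 h3
  rw [h1, h2, h3]
  by_cases ha : a ∈ A <;> simp [Set.indicator_apply, ha]

end LpAux

open MeasureTheory in
/-- For a complete σ-finite measure space, `1 ≤ p < ∞` and a Banach space
`X`, one has `n(L_p(μ, X)) ≤ n(X)`. -/
theorem nindex_Lp_le {Ω : Type*} [MeasurableSpace Ω] (μ : Measure Ω) [SigmaFinite μ]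
    (hμ : μ.IsComplete) (p : ℝ≥0∞) [Fact (1 ≤ p)] (hp : p ≠ ∞)
    (X : Type*) [NormedAddCommGroup X] [NormedSpace ℝ X] [CompleteSpace X] :
    nindex ↥(Lp X p μ) ≤ nindex X := by
  have hp0 : p ≠ 0 := by
    have h1 : (1 : ℝ≥0∞) ≤ p := Fact.out
    intro h; rw [h] at h1; exact (by norm_num : ¬ ((1:ℝ≥0∞) ≤ 0)) h1
  rcases subsingleton_or_nontrivial X with hX | hX
  · -- trivial space case
    have hsub : Subsingleton (Lp X p μ) :=
      ⟨fun f g => Lp.ext (Filter.Eventually.of_forall fun a => Subsingleton.elim _ _)⟩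
    have h1 : {r : ℝ | ∃ T : X →L[ℝ] X, ‖T‖ = 1 ∧ r = vrad T} = ∅ := by
      ext r; simp only [Set.mem_setOf_eq, Set.mem_empty_iff_false, iff_false]
      rintro ⟨T, hT, -⟩
      have : T = 0 := Subsingleton.elim _ _
      rw [this, norm_zero] at hT; exact zero_ne_one hT
    have h2 : {r : ℝ | ∃ T : ↥(Lp X p μ) →L[ℝ] ↥(Lp X p μ), ‖T‖ = 1 ∧ r = vrad T} = ∅ := by
      ext r; simp only [Set.mem_setOf_eq, Set.mem_empty_iff_false, iff_false]
      rintro ⟨T, hT, -⟩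
      have : T = 0 := Subsingleton.elim _ _
      rw [this, norm_zero] at hT; exact zero_ne_one hT
    unfold nindex
    rw [h1, h2]
  · by_cases hμ0 : μ = 0
    · -- zero measure: Lp is trivial
      subst hμ0
      have hsub : Subsingleton (Lp X p (0 : Measure Ω)) := by
        refine ⟨fun f g => Lp.ext ?_⟩
        simp [Filter.EventuallyEq, ae_zero]
      have h2 : {r : ℝ | ∃ T : ↥(Lp X p (0 : Measure Ω)) →L[ℝ] ↥(Lp X p (0 : Measure Ω)),
          ‖T‖ = 1 ∧ r = vrad T} = ∅ := by
        ext r; simp only [Set.mem_setOf_eq, Set.mem_empty_iff_false, iff_false]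
        rintro ⟨T, hT, -⟩
        have : T = 0 := Subsingleton.elim _ _
        rw [this, norm_zero] at hT; exact zero_ne_one hT
      unfold nindex
      rw [h2, Real.sInf_empty]
      apply Real.le_sInf _ le_rfl
      rintro r ⟨T, hT, rfl⟩
      exact vrad_nonneg T
    · -- main case
      -- a set of positive finite measure
      obtain ⟨n, hn⟩ : ∃ n, μ (spanningSets μ n) ≠ 0 := by
        by_contra h
        push_neg at h
        have : μ Set.univ = 0 := by
          rw [← iUnion_spanningSets μ]
          exact measure_iUnion_null h
        exact hμ0 (Measure.measure_univ_eq_zero.mp this)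
      set A := spanningSets μ n with hAdef
      have hA : MeasurableSet A := measurableSet_spanningSets μ n
      have hAfin : μ A ≠ ∞ := (measure_spanningSets_lt_top μ n).ne
      have hc : (0 : ℝ) < (μ A).toReal ^ (1 / p.toReal) := by
        apply Real.rpow_pos_of_pos
        exact ENNReal.toReal_pos hn hAfin
      -- lower bound for the norm of compLpL
      have hlower : ∀ L : X →L[ℝ] X, ‖L‖ ≤ ‖L.compLpL p μ‖ := by
        intro L
        apply ContinuousLinearMap.opNorm_le_bound _ (norm_nonneg _)
        intro x
        have h1 : ‖indicatorConstLp p hA hAfin (L x)‖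
            ≤ ‖L.compLpL p μ‖ * ‖indicatorConstLp p hA hAfin x‖ := by
          rw [← compLpL_indicatorConstLp L hA hAfin x]
          exact (L.compLpL p μ).le_opNorm _
        rw [norm_indicatorConstLp hp0 hp, norm_indicatorConstLp hp0 hp] at h1
        have h2 : ‖L x‖ * ((μ A).toReal ^ (1 / p.toReal))
            ≤ (‖L.compLpL p μ‖ * ‖x‖) * ((μ A).toReal ^ (1 / p.toReal)) := by
          calc ‖L x‖ * ((μ A).toReal ^ (1 / p.toReal))
              ≤ ‖L.compLpL p μ‖ * (‖x‖ * (μ A).toReal ^ (1 / p.toReal)) := h1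
            _ = (‖L.compLpL p μ‖ * ‖x‖) * ((μ A).toReal ^ (1 / p.toReal)) := by ring
        exact le_of_mul_le_mul_right h2 hc
      have hSXne : {r : ℝ | ∃ T : X →L[ℝ] X, ‖T‖ = 1 ∧ r = vrad T}.Nonempty :=
        ⟨vrad (ContinuousLinearMap.id ℝ X), ContinuousLinearMap.id ℝ X,
          ContinuousLinearMap.norm_id, rfl⟩
      show nindex ↥(Lp X p μ) ≤ sInf {r : ℝ | ∃ T : X →L[ℝ] X, ‖T‖ = 1 ∧ r = vrad T}
      apply le_csInf hSXne
      rintro r ⟨T, hT, rfl⟩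
      set S := T.compLpL p μ with hSdef
      have hSnorm : ‖S‖ = 1 :=
        le_antisymm ((ContinuousLinearMap.norm_compLpL_le T).trans_eq hT)
          (hT ▸ hlower T)
      have hLpBdd : BddBelow {r : ℝ | ∃ U : ↥(Lp X p μ) →L[ℝ] ↥(Lp X p μ),
          ‖U‖ = 1 ∧ r = vrad U} := by
        refine ⟨0, ?_⟩
        rintro r ⟨U, hU, rfl⟩
        have : Nontrivial ↥(Lp X p μ) := by
          by_contra h
          have hsub : Subsingleton ↥(Lp X p μ) := not_nontrivial_iff_subsingleton.mp h
          have : U = 0 := Subsingleton.elim _ _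
          rw [this, norm_zero] at hU; exact zero_ne_one hU
        exact vrad_nonneg U
      refine le_trans (csInf_le hLpBdd ⟨S, hSnorm, rfl⟩) ?_
      -- vrad S ≤ vrad T
      apply Real.sSup_le _ (vrad_nonneg T)
      rintro r ⟨g, Φ, hg, hΦ, hΦg, rfl⟩
      set β := vrad T with hβdef
      have hβ1 : β ≤ 1 := hT ▸ vrad_le_norm T
      -- operator norm bounds transferred to Lp
      have hcomp : ∀ (L : X →L[ℝ] X), ∀ t : ℝ,
          ‖(1 : ↥(Lp X p μ) →L[ℝ] ↥(Lp X p μ)) + t • L.compLpL p μ‖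
            ≤ ‖(1 : X →L[ℝ] X) + t • L‖ := by
        intro L t
        rw [← compLpL_one_add_smul]
        exact ContinuousLinearMap.norm_compLpL_le _
      have hbound : ∀ (L : X →L[ℝ] X), ‖L‖ ≤ 1 →
          (∀ (x : X) (f : X →L[ℝ] ℝ), ‖x‖ = 1 → ‖f‖ = 1 → f x = 1 → f (L x) ≤ β) →
          ∀ t : ℝ, 0 < t → t < 1 →
          ‖(1 : ↥(Lp X p μ) →L[ℝ] ↥(Lp X p μ)) + t • L.compLpL p μ‖
            ≤ (1 + t ^ 2) / (1 - t * β) := fun L hL hpairs t ht0 ht1 =>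
        (hcomp L t).trans (norm_one_add_smul_le L hL hβ1 hpairs ht0 ht1)
      have h1 : Φ (S g) ≤ β := by
        apply pair_bound S hβ1 _ hg hΦ hΦg
        exact hbound T hT.le (fun x f hx hf hfx => (le_abs_self _).trans (abs_le_vrad hx hf hfx))
      have h2 : -Φ (S g) ≤ β := by
        have hnegS : (-T).compLpL p μ = -S := by
          rw [hSdef]
          have : (-T) = (-1 : ℝ) • T := by simp
          rw [this, ContinuousLinearMap.smul_compLpL]
          simp
        have h3 : Φ ((-S) g) ≤ β := by
          apply pair_bound (-S) hβ1 _ hg hΦ hΦg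
          intro t ht0 ht1
          rw [← hnegS]
          apply hbound (-T) (by rw [norm_neg, hT])
            (fun x f hx hf hfx => ?_) t ht0 ht1
          have : f ((-T) x) = -(f (T x)) := by simp
          rw [this]
          exact (neg_le_abs _).trans (abs_le_vrad hx hf hfx)
        have : Φ ((-S) g) = -Φ (S g) := by simp
        rw [this] at h3
        exact h3
      exact abs_le.mpr ⟨by linarith, h1⟩
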